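/- Let (X,d) be a metric space, Y ⊆ X a subset with a metric d_Y satisfying d(x,y) ≤ d_Y(x,y) ≤ Λ·d(x,y) for all x,y ∈ Y, where Λ ≥ 1. Suppose for the metric d_Y, every d_Y-ball of radius s in Y can be covered by N_Y d_Y-balls of radius s/2 centered in Y. Then for any natural number m with 2^m > 2Λ, every set of the form B_d(p,r) ∩ Y (p ∈ X, r > 0) nonempty can be covered by N_Y^(m+1) sets of the form B_d(x,r/2) with centers x ∈ Y. -/

import Mathlib

/-- Iterated intrinsic covering. -/
theorem iterated_covering {Y : Type*} (dY : Y → Y → ℝ) (NY : ℕ)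
    (hNY : ∀ (y : Y) (s : ℝ), 0 < s → ∃ c : Fin NY → Y,
      {z : Y | dY y z < s} ⊆ ⋃ i, {z : Y | dY (c i) z < s / 2}) :
    ∀ (k : ℕ) (y : Y) (s : ℝ), 0 < s → ∃ c : Fin (NY ^ k) → Y,
      {z : Y | dY y z < s} ⊆ ⋃ i, {z : Y | dY (c i) z < s / 2 ^ k} := by
  intro k
  induction k with
  | zero =>
    intro y s hs
    refine ⟨fun _ => y, fun z hz => ?_⟩
    exact Set.mem_iUnion.2 ⟨⟨0, by simp⟩, by simpa using hz⟩
  | succ k ih =>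
    intro y s hs
    obtain ⟨c, hc⟩ := hNY y s hs
    choose d hd using fun i => ih (c i) (s / 2) (by positivity)
    have hcast : NY ^ (k + 1) = NY * NY ^ k := by ring
    refine ⟨fun j => let ij := finProdFinEquiv.symm (Fin.cast hcast j); d ij.1 ij.2,
      fun z hz => ?_⟩
    obtain ⟨_, ⟨i, rfl⟩, hzi⟩ := hc hz
    obtain ⟨_, ⟨l, rfl⟩, hzl⟩ := hd i hzi
    refine Set.mem_iUnion.2 ⟨Fin.cast hcast.symm (finProdFinEquiv (i, l)), ?_⟩
    simp only [Set.mem_setOf_eq]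
    have : s / 2 / 2 ^ k = s / 2 ^ (k + 1) := by ring
    rw [Fin.cast_cast]
    simpa [this] using hzl

/-- Extrinsic packing from intrinsic packing via the distortion `Λ`
(connected case of Lemma 3.1). -/
theorem extrinsic_packing_of_intrinsic
    {X : Type*} [MetricSpace X] (Y : Set X) (dY : Y → Y → ℝ)
    (Λ : ℝ) (hΛ : 1 ≤ Λ)
    (hlow : ∀ x y : Y, dist (x : X) (y : X) ≤ dY x y)
    (hup : ∀ x y : Y, dY x y ≤ Λ * dist (x : X) (y : X))
    (NY : ℕ)
    (hNY : ∀ (y : Y) (s : ℝ), 0 < s → ∃ c : Fin NY → Y,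
      {z : Y | dY y z < s} ⊆ ⋃ i, {z : Y | dY (c i) z < s / 2})
    (m : ℕ) (hm : 2 * Λ < 2 ^ m) :
    ∀ (p : X) (r : ℝ), 0 < r → (Metric.ball p r ∩ Y).Nonempty →
      ∃ c : Fin (NY ^ (m + 1)) → Y,
        Metric.ball p r ∩ Y ⊆ ⋃ i, Metric.ball ((c i : X)) (r / 2) := by
  intro p r hr ⟨y0, hy0b, hy0Y⟩
  have hΛ0 : 0 < Λ := lt_of_lt_of_le one_pos hΛ
  obtain ⟨c, hc⟩ := iterated_covering dY NY hNY (m + 1) ⟨y0, hy0Y⟩ (2 * Λ * r)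
    (by positivity)
  refine ⟨c, fun z ⟨hzb, hzY⟩ => ?_⟩
  have h1 : dY ⟨y0, hy0Y⟩ ⟨z, hzY⟩ < 2 * Λ * r := by
    have hd : dist y0 z < 2 * r := by
      calc dist y0 z ≤ dist y0 p + dist p z := dist_triangle _ _ _
        _ < r + r := by
            rw [Metric.mem_ball] at hy0b hzb
            rw [dist_comm] at hzb
            exact add_lt_add hy0b hzb
        _ = 2 * r := by ring
    calc dY ⟨y0, hy0Y⟩ ⟨z, hzY⟩ ≤ Λ * dist y0 z := hup _ _
      _ < Λ * (2 * r) := by exact (mul_lt_mul_iff_right₀ hΛ0).2 hd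
      _ = 2 * Λ * r := by ring
  obtain ⟨_, ⟨i, rfl⟩, hi⟩ := hc h1
  refine Set.mem_iUnion.2 ⟨i, ?_⟩
  simp only [Set.mem_setOf_eq] at hi
  have h2 : dist ((c i : Y) : X) z ≤ dY (c i) ⟨z, hzY⟩ := hlow (c i) ⟨z, hzY⟩
  have h3 : 2 * Λ * r / 2 ^ (m + 1) < r / 2 := by
    rw [div_lt_div_iff₀ (by positivity) two_pos]
    have : (2:ℝ) ^ (m + 1) = 2 * 2 ^ m := by ring
    rw [this]
    calc 2 * Λ * r * 2 = 2 * (2 * Λ) * r := by ring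
      _ < 2 * 2 ^ m * r := by
          apply mul_lt_mul_of_pos_right _ hr
          exact (mul_lt_mul_iff_right₀ two_pos).2 hm
      _ = r * (2 * 2 ^ m) := by ring
  have : dist z ((c i : Y) : X) < r / 2 := by
    rw [dist_comm]
    exact lt_of_le_of_lt h2 (lt_of_lt_of_le hi h3.le)
  exact Metric.mem_ball.2 this
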